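/- For positive semidefinite operators P, Q on C^n and any operator X on C^n, the block operator [[P, X], [X*, Q]] is positive semidefinite if and only if X = √P K √Q for some operator K with spectral norm at most 1. -/

import Mathlib

open Matrix Kronecker
open scoped ComplexOrder

/-- Trace norm `‖A‖₁ = Tr √(Aᴴ A)` of a complex matrix. -/
noncomputable def traceNorm {α β : Type*} [Fintype α] [Fintype β] [DecidableEq α] [DecidableEq β]
    (A : Matrix α β ℂ) : ℝ :=
  (((Matrix.posSemidef_conjTranspose_mul_self A).1.eigenvectorUnitary : Matrix β β ℂ) *
    diagonal (((↑) : ℝ → ℂ) ∘ Real.sqrt ∘ (Matrix.posSemidef_conjTranspose_mul_self A).1.eigenvalues) *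
    (star (Matrix.posSemidef_conjTranspose_mul_self A).1.eigenvectorUnitary : Matrix β β ℂ)).trace.re

/-- Spectral norm (operator norm w.r.t. Euclidean norms). -/
noncomputable def specNorm {α β : Type*} [Fintype α] [Fintype β] [DecidableEq α] [DecidableEq β]
    (A : Matrix α β ℂ) : ℝ :=
  ‖LinearMap.toContinuousLinearMap (Matrix.toEuclideanLin A)‖

/-- Frobenius norm. -/
noncomputable def frobNorm {α β : Type*} [Fintype α] [Fintype β]
    (A : Matrix α β ℂ) : ℝ :=
  Real.sqrt ((Aᴴ * A).trace.re)

/-- Positive semidefinite square root (junk value `0` off the PSD cone). -/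
noncomputable def msqrt {α : Type*} [Fintype α] [DecidableEq α]
    (P : Matrix α α ℂ) : Matrix α α ℂ :=
  open scoped Classical in
  if h : P.PosSemidef then (h.1.eigenvectorUnitary : Matrix α α ℂ) *
    diagonal (((↑) : ℝ → ℂ) ∘ Real.sqrt ∘ h.1.eigenvalues) * (star h.1.eigenvectorUnitary : Matrix α α ℂ) else 0

/-- Fidelity `F(P,Q) = ‖√P √Q‖₁`. -/
noncomputable def fid {α : Type*} [Fintype α] [DecidableEq α]
    (P Q : Matrix α α ℂ) : ℝ :=
  traceNorm (msqrt P * msqrt Q)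

/-- Partial trace over the second (right) tensor factor. -/
noncomputable def ptraceRight {a b : ℕ} (M : Matrix (Fin a × Fin b) (Fin a × Fin b) ℂ) :
    Matrix (Fin a) (Fin a) ℂ :=
  Matrix.of fun i j => ∑ s : Fin b, M (i, s) (j, s)

/-- Partial trace over the first (left) tensor factor. -/
noncomputable def ptraceLeft {a b : ℕ} (M : Matrix (Fin a × Fin b) (Fin a × Fin b) ℂ) :
    Matrix (Fin b) (Fin b) ℂ :=
  Matrix.of fun i j => ∑ s : Fin a, M (s, i) (s, j)

/-- `Φ ⊗ id` acting on `L(Cⁿ ⊗ Cᵏ)`. -/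
noncomputable def tensorId {n m k : ℕ}
    (Φ : Matrix (Fin n) (Fin n) ℂ → Matrix (Fin m) (Fin m) ℂ)
    (M : Matrix (Fin n × Fin k) (Fin n × Fin k) ℂ) :
    Matrix (Fin m × Fin k) (Fin m × Fin k) ℂ :=
  Matrix.of fun p q => Φ (Matrix.of fun a c => M (a, p.2) (c, q.2)) p.1 q.1

/-- Completely bounded trace norm `¦¦¦Φ¦¦¦₁ = ‖Φ ⊗ id_{L(Cⁿ)}‖₁`. -/
noncomputable def cbTraceNorm {n m : ℕ}
    (Φ : Matrix (Fin n) (Fin n) ℂ → Matrix (Fin m) (Fin m) ℂ) : ℝ :=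
  sSup {c : ℝ | ∃ M : Matrix (Fin n × Fin n) (Fin n × Fin n) ℂ,
    traceNorm M ≤ 1 ∧ c = traceNorm (tensorId Φ M)}

/-- Completely bounded spectral norm of `Ψ : L(Cᵐ) → L(Cⁿ)`, with ancilla `Cⁿ`. -/
noncomputable def cbSpecNorm {m n : ℕ}
    (Ψ : Matrix (Fin m) (Fin m) ℂ → Matrix (Fin n) (Fin n) ℂ) : ℝ :=
  sSup {c : ℝ | ∃ M : Matrix (Fin m × Fin n) (Fin m × Fin n) ℂ,
    specNorm M ≤ 1 ∧ c = specNorm (tensorId Ψ M)}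

/-- Choi–Jamiołkowski representation `J(Φ) = ∑ᵢⱼ Φ(Eᵢⱼ) ⊗ Eᵢⱼ`. -/
noncomputable def choi {n m : ℕ}
    (Φ : Matrix (Fin n) (Fin n) ℂ → Matrix (Fin m) (Fin m) ℂ) :
    Matrix (Fin m × Fin n) (Fin m × Fin n) ℂ :=
  ∑ i : Fin n, ∑ j : Fin n, (Φ (Matrix.single i j 1)) ⊗ₖ (Matrix.single i j 1)

/-- vec mapping. -/
def vecM {n : ℕ} (A : Matrix (Fin n) (Fin n) ℂ) : Fin n × Fin n → ℂ := fun p => A p.1 p.2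

namespace Stmt0Aux

variable {n : ℕ}

lemma diag_real_herm (f : Fin n → ℝ) :
    (diagonal (fun i => ((f i : ℝ) : ℂ))).IsHermitian := by
  rw [Matrix.IsHermitian, Matrix.diagonal_conjTranspose]
  exact congrArg diagonal (funext fun i => Complex.conj_ofReal _)

lemma diag_congr (f g : Fin n → ℝ) (h : ∀ i, f i = g i) :
    (diagonal (fun i => ((f i : ℝ) : ℂ))) = diagonal (fun i => ((g i : ℝ) : ℂ)) :=
  congrArg diagonal (funext fun i => by rw [h i])

/-- Pseudoinverse and support projection for a Hermitian matrix. -/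
lemma exists_pinv {S : Matrix (Fin n) (Fin n) ℂ} (hS : S.IsHermitian) :
    ∃ g p : Matrix (Fin n) (Fin n) ℂ, g.IsHermitian ∧ p.IsHermitian ∧
      S * g = p ∧ g * S = p ∧ p * p = p ∧ S * p = S := by
  classical
  set U : Matrix (Fin n) (Fin n) ℂ := (hS.eigenvectorUnitary : Matrix (Fin n) (Fin n) ℂ) with hU
  have hUU : (star U) * U = 1 := by
    simpa [hU] using (Matrix.mem_unitaryGroup_iff').mp hS.eigenvectorUnitary.2
  set μ : Fin n → ℝ := hS.eigenvalues with hμ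
  have key : ∀ f g : Fin n → ℝ,
      (U * diagonal (fun i => ((f i : ℝ) : ℂ)) * star U) *
        (U * diagonal (fun i => ((g i : ℝ) : ℂ)) * star U)
      = U * diagonal (fun i => ((f i * g i : ℝ) : ℂ)) * star U := by
    intro f g
    rw [mul_assoc, mul_assoc, ← mul_assoc (star U), ← mul_assoc (star U), hUU, one_mul,
      ← mul_assoc, ← mul_assoc, mul_assoc U, diagonal_mul_diagonal]
    congr 1
    congr 1
    funext i
    push_cast
    ring
  have hSc : S = U * diagonal (fun i => ((μ i : ℝ) : ℂ)) * star U := by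
    rw [hU, hμ]
    simpa [Function.comp_def] using hS.spectral_theorem
  refine ⟨U * diagonal (fun i => (((μ i)⁻¹ : ℝ) : ℂ)) * star U,
    U * diagonal (fun i => (((μ i)⁻¹ * μ i : ℝ) : ℂ)) * star U, ?_, ?_, ?_, ?_, ?_, ?_⟩
  · exact Matrix.isHermitian_mul_mul_conjTranspose U (diag_real_herm _)
  · exact Matrix.isHermitian_mul_mul_conjTranspose U (diag_real_herm _)
  · rw [hSc, key, diag_congr _ _ (fun i => mul_comm _ _)]
  · rw [hSc, key]
  · rw [key, diag_congr (fun i => (μ i)⁻¹ * μ i * ((μ i)⁻¹ * μ i)) (fun i => (μ i)⁻¹ * μ i)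
      (fun i => by rcases eq_or_ne (μ i) 0 with h | h <;> field_simp)]
  · conv_lhs => rw [hSc, key]
    rw [hSc, diag_congr (fun i => μ i * ((μ i)⁻¹ * μ i)) μ
      (fun i => by rcases eq_or_ne (μ i) 0 with h | h <;> field_simp)]

/-- move a matrix across the dot product -/
lemma dot_shift (A : Matrix (Fin n) (Fin n) ℂ) (x v : Fin n → ℂ) :
    star x ⬝ᵥ (A *ᵥ v) = star (Aᴴ *ᵥ x) ⬝ᵥ v := by
  rw [Matrix.star_mulVec, Matrix.conjTranspose_conjTranspose, Matrix.dotProduct_mulVec]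

lemma dot_shift' (A : Matrix (Fin n) (Fin n) ℂ) (x v : Fin n → ℂ) :
    star (A *ᵥ x) ⬝ᵥ v = star x ⬝ᵥ (Aᴴ *ᵥ v) := by
  rw [dot_shift, Matrix.conjTranspose_conjTranspose]

/-- conjugate symmetry of the off-diagonal term -/
lemma dot_conj (X : Matrix (Fin n) (Fin n) ℂ) (x y : Fin n → ℂ) :
    star y ⬝ᵥ (Xᴴ *ᵥ x) = starRingEnd ℂ (star x ⬝ᵥ (X *ᵥ y)) := by
  rw [Matrix.star_dotProduct, Matrix.star_mulVec, Matrix.conjTranspose_conjTranspose,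
    ← Matrix.dotProduct_mulVec]
  rfl

/-- quadratic form of a 2x2 block matrix -/
lemma quad (P Q X : Matrix (Fin n) (Fin n) ℂ) (x y : Fin n → ℂ) :
    star (Sum.elim x y) ⬝ᵥ ((Matrix.fromBlocks P X Xᴴ Q) *ᵥ Sum.elim x y)
    = star x ⬝ᵥ (P *ᵥ x) + star x ⬝ᵥ (X *ᵥ y)
      + star y ⬝ᵥ (Xᴴ *ᵥ x) + star y ⬝ᵥ (Q *ᵥ y) := by
  rw [Matrix.fromBlocks_mulVec]
  have hs : star (Sum.elim x y) = Sum.elim (star x) (star y) := by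
    funext i; cases i <;> rfl
  rw [hs, sumElim_dotProduct_sumElim, dotProduct_add, dotProduct_add]
  simp only [Sum.elim_comp_inl, Sum.elim_comp_inr]
  ring

lemma elim_decomp (v : Fin n ⊕ Fin n → ℂ) :
    v = Sum.elim (v ∘ Sum.inl) (v ∘ Sum.inr) := by
  funext i; cases i <;> rfl


noncomputable def env {n : ℕ} (v : Fin n → ℂ) : ℝ :=
  ‖(WithLp.equiv 2 (Fin n → ℂ)).symm v‖

lemma env_nonneg (v : Fin n → ℂ) : 0 ≤ env v := norm_nonneg _

lemma dot_self_eq (v : Fin n → ℂ) : star v ⬝ᵥ v = ((env v ^ 2 : ℝ) : ℂ) := by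
  rw [dotProduct_comm, ← EuclideanSpace.inner_toLp_toLp]
  rw [inner_self_eq_norm_sq_to_K (𝕜 := ℂ)]
  push_cast
  rfl

lemma dot_norm_le (u v : Fin n → ℂ) : ‖star u ⬝ᵥ v‖ ≤ env u * env v := by
  rw [dotProduct_comm, ← EuclideanSpace.inner_toLp_toLp]
  exact norm_inner_le_norm _ _

lemma re_dot_le (u v : Fin n → ℂ) : (star u ⬝ᵥ v).re ≤ env u * env v :=
  le_trans (Complex.re_le_norm _) (dot_norm_le u v)

lemma env_sq_eq (v : Fin n → ℂ) : (star v ⬝ᵥ v).re = env v ^ 2 := by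
  rw [dot_self_eq]; exact Complex.ofReal_re _

/-- Norm contraction by a Hermitian idempotent. -/
lemma proj_bound {p : Matrix (Fin n) (Fin n) ℂ} (hp : p.IsHermitian) (hpp : p * p = p)
    (x : Fin n → ℂ) : env (p *ᵥ x) ≤ env x := by
  have h1 : star (p *ᵥ x) ⬝ᵥ (p *ᵥ x) = star x ⬝ᵥ (p *ᵥ x) := by
    rw [dot_shift', (show pᴴ = p from hp), Matrix.mulVec_mulVec, hpp]
  have h2 : env (p *ᵥ x) ^ 2 ≤ env x * env (p *ᵥ x) := by
    rw [← env_sq_eq, h1]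
    exact re_dot_le _ _
  rcases eq_or_lt_of_le (env_nonneg (p *ᵥ x)) with h | h
  · rw [← h]; exact env_nonneg x
  · nlinarith

/-- Cauchy–Schwarz-type inequality from block positivity. -/
lemma cs {P Q X : Matrix (Fin n) (Fin n) ℂ}
    (h : (Matrix.fromBlocks P X Xᴴ Q).PosSemidef) (x y : Fin n → ℂ) :
    ‖star x ⬝ᵥ (X *ᵥ y)‖ ^ 2 ≤ (star x ⬝ᵥ (P *ᵥ x)).re * (star y ⬝ᵥ (Q *ᵥ y)).re := by
  set z := star x ⬝ᵥ (X *ᵥ y) with hz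
  have ha0 : (0 : ℂ) ≤ star x ⬝ᵥ (P *ᵥ x) := by
    have := h.dotProduct_mulVec_nonneg (Sum.elim x 0)
    rw [quad] at this
    simpa using this
  have hb0 : (0 : ℂ) ≤ star y ⬝ᵥ (Q *ᵥ y) := by
    have := h.dotProduct_mulVec_nonneg (Sum.elim 0 y)
    rw [quad] at this
    simpa using this
  set a := (star x ⬝ᵥ (P *ᵥ x)).re with hadef
  set b := (star y ⬝ᵥ (Q *ᵥ y)).re with hbdef
  have ha : 0 ≤ a := (Complex.le_def.mp ha0).1
  have hb : 0 ≤ b := (Complex.le_def.mp hb0).1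
  have haC : star x ⬝ᵥ (P *ᵥ x) = (a : ℂ) := by
    have := (Complex.le_def.mp ha0).2
    apply Complex.ext <;> simp [hadef, ← this]
  have hbC : star y ⬝ᵥ (Q *ᵥ y) = (b : ℂ) := by
    have := (Complex.le_def.mp hb0).2
    apply Complex.ext <;> simp [hbdef, ← this]
  set nz := Complex.normSq z with hnz
  have key : ∀ t : ℝ, 0 ≤ (nz * b) * (t * t) + (2 * nz) * t + a := by
    intro t
    have h2 := h.dotProduct_mulVec_nonneg (Sum.elim x (((t : ℂ) * starRingEnd ℂ z) • y))
    rw [quad] at h2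
    set c := (t : ℂ) * starRingEnd ℂ z with hc
    have e1 : star x ⬝ᵥ (X *ᵥ (c • y)) = c * z := by
      rw [Matrix.mulVec_smul, dotProduct_smul, smul_eq_mul, hz]
    have e2 : star (c • y) ⬝ᵥ (Xᴴ *ᵥ x) = starRingEnd ℂ c * starRingEnd ℂ z := by
      rw [star_smul, smul_dotProduct, smul_eq_mul, dot_conj, ← hz]
      rfl
    have e3 : star (c • y) ⬝ᵥ (Q *ᵥ (c • y)) = starRingEnd ℂ c * c * (b : ℂ) := by
      rw [Matrix.mulVec_smul, dotProduct_smul, star_smul, smul_dotProduct,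
        smul_eq_mul, smul_eq_mul, hbC, RCLike.star_def]
      ring
    rw [e1, e2, e3, haC] at h2
    have hzz : z * starRingEnd ℂ z = (nz : ℂ) := Complex.mul_conj z
    have heq : (a : ℂ) + c * z + starRingEnd ℂ c * starRingEnd ℂ z
        + starRingEnd ℂ c * c * (b : ℂ)
        = (((nz * b) * (t * t) + (2 * nz) * t + a : ℝ) : ℂ) := by
      simp only [hc, _root_.map_mul, Complex.conj_ofReal, Complex.conj_conj]
      push_cast
      linear_combination ((t : ℂ) + (t : ℂ) + (t : ℂ) * (t : ℂ) * (b : ℂ)) * hzz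
    rw [heq] at h2
    exact Complex.zero_le_real.mp h2
  have hd := discrim_le_zero key
  rw [discrim] at hd
  have hnorm : ‖z‖ ^ 2 = nz := by
    rw [hnz, Complex.normSq_eq_norm_sq]
  rcases eq_or_lt_of_le (show (0:ℝ) ≤ nz from hnz ▸ Complex.normSq_nonneg z) with h0 | h0
  · rw [hnorm, ← h0]
    exact mul_nonneg ha hb
  · rw [hnorm]
    nlinarith [hd]

lemma eq_zero_of_dot {M : Matrix (Fin n) (Fin n) ℂ}
    (h : ∀ x y : Fin n → ℂ, star x ⬝ᵥ (M *ᵥ y) = 0) : M = 0 := by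
  ext i j
  have := h (Pi.single i 1) (Pi.single j 1)
  simpa [dotProduct, Pi.single_apply, Matrix.mulVec, star_star,
    Finset.sum_ite_eq, apply_ite] using this


lemma env_mulVec_le (K : Matrix (Fin n) (Fin n) ℂ) (v : Fin n → ℂ) :
    env (K *ᵥ v) ≤ specNorm K * env v := by
  have e : (LinearMap.toContinuousLinearMap (Matrix.toEuclideanLin K))
      ((WithLp.equiv 2 (Fin n → ℂ)).symm v) = (WithLp.equiv 2 (Fin n → ℂ)).symm (K *ᵥ v) :=
    Matrix.toEuclideanLin_apply_piLp_toLp K v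
  have h := (LinearMap.toContinuousLinearMap (Matrix.toEuclideanLin K)).le_opNorm
      ((WithLp.equiv 2 (Fin n → ℂ)).symm v)
  rw [e] at h
  exact h

lemma specNorm_le_one {K : Matrix (Fin n) (Fin n) ℂ}
    (hb : ∀ v : Fin n → ℂ, env (K *ᵥ v) ≤ env v) : specNorm K ≤ 1 := by
  refine ContinuousLinearMap.opNorm_le_bound _ zero_le_one fun w => ?_
  rw [one_mul]
  have e2 : (WithLp.equiv 2 (Fin n → ℂ)).symm ((WithLp.equiv 2 (Fin n → ℂ)) w) = w :=
    (WithLp.equiv 2 (Fin n → ℂ)).symm_apply_apply w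
  have e : (LinearMap.toContinuousLinearMap (Matrix.toEuclideanLin K)) w
      = (WithLp.equiv 2 (Fin n → ℂ)).symm (K *ᵥ ((WithLp.equiv 2 (Fin n → ℂ)) w)) := by
    conv_lhs => rw [← e2]
    exact Matrix.toEuclideanLin_apply_piLp_toLp K _
  rw [e]
  calc ‖(WithLp.equiv 2 (Fin n → ℂ)).symm (K *ᵥ ((WithLp.equiv 2 (Fin n → ℂ)) w))‖
      ≤ env ((WithLp.equiv 2 (Fin n → ℂ)) w) := hb _
    _ = ‖w‖ := by rw [env, e2]

lemma msqrt_facts {P : Matrix (Fin n) (Fin n) ℂ} (hP : P.PosSemidef) :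
    ((hP.1.eigenvectorUnitary : Matrix (Fin n) (Fin n) ℂ) *
      diagonal (((↑) : ℝ → ℂ) ∘ Real.sqrt ∘ hP.1.eigenvalues) *
      (star hP.1.eigenvectorUnitary : Matrix (Fin n) (Fin n) ℂ)).PosSemidef ∧
    ((hP.1.eigenvectorUnitary : Matrix (Fin n) (Fin n) ℂ) *
      diagonal (((↑) : ℝ → ℂ) ∘ Real.sqrt ∘ hP.1.eigenvalues) *
      (star hP.1.eigenvectorUnitary : Matrix (Fin n) (Fin n) ℂ)) * ((hP.1.eigenvectorUnitary : Matrix (Fin n) (Fin n) ℂ) *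
      diagonal (((↑) : ℝ → ℂ) ∘ Real.sqrt ∘ hP.1.eigenvalues) *
      (star hP.1.eigenvectorUnitary : Matrix (Fin n) (Fin n) ℂ)) = P := by
  set U : Matrix (Fin n) (Fin n) ℂ := (hP.1.eigenvectorUnitary : Matrix (Fin n) (Fin n) ℂ) with hU
  have hUU : (star U) * U = 1 := by
    simpa [hU] using (Matrix.mem_unitaryGroup_iff').mp hP.1.eigenvectorUnitary.2
  have hd : (0 : Fin n → ℂ) ≤ ((↑) : ℝ → ℂ) ∘ Real.sqrt ∘ hP.1.eigenvalues :=
    fun i => Complex.zero_le_real.mpr (Real.sqrt_nonneg _)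
  have hsp : P = U * diagonal (((↑) : ℝ → ℂ) ∘ hP.1.eigenvalues) * star U := by
    rw [hU]
    simpa using hP.1.spectral_theorem
  change (U * _ * star U).PosSemidef ∧ U * _ * star U * (U * _ * star U) = P
  refine ⟨(PosSemidef.diagonal hd).mul_mul_conjTranspose_same U, ?_⟩
  rw [mul_assoc, mul_assoc, ← mul_assoc (star U), ← mul_assoc (star U), hUU, one_mul,
    ← mul_assoc, ← mul_assoc, mul_assoc U, diagonal_mul_diagonal]
  have hdd : (fun i => (((↑) : ℝ → ℂ) ∘ Real.sqrt ∘ hP.1.eigenvalues) i *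
      (((↑) : ℝ → ℂ) ∘ Real.sqrt ∘ hP.1.eigenvalues) i) = ((↑) : ℝ → ℂ) ∘ hP.1.eigenvalues := by
    funext i
    simp only [Function.comp_apply]
    rw [← Complex.ofReal_mul, Real.mul_self_sqrt (hP.eigenvalues_nonneg i)]
  rw [hdd, ← hsp]

end Stmt0Aux

open Stmt0Aux in
/-- block PSD criterion (Bhatia, Theorem IX.5.9). -/
theorem stmt0 {n : ℕ} (P Q X : Matrix (Fin n) (Fin n) ℂ)
    (hP : P.PosSemidef) (hQ : Q.PosSemidef) :
    (Matrix.fromBlocks P X Xᴴ Q).PosSemidef ↔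
      ∃ K : Matrix (Fin n) (Fin n) ℂ, specNorm K ≤ 1 ∧ X = msqrt P * K * msqrt Q := by
  have hmP : msqrt P = ((hP.1.eigenvectorUnitary : Matrix (Fin n) (Fin n) ℂ) *
      diagonal (((↑) : ℝ → ℂ) ∘ Real.sqrt ∘ hP.1.eigenvalues) *
      (star hP.1.eigenvectorUnitary : Matrix (Fin n) (Fin n) ℂ)) := dif_pos hP
  have hmQ : msqrt Q = ((hQ.1.eigenvectorUnitary : Matrix (Fin n) (Fin n) ℂ) *
      diagonal (((↑) : ℝ → ℂ) ∘ Real.sqrt ∘ hQ.1.eigenvalues) *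
      (star hQ.1.eigenvectorUnitary : Matrix (Fin n) (Fin n) ℂ)) := dif_pos hQ
  obtain ⟨hS, hSS⟩ := msqrt_facts hP
  obtain ⟨hT, hTT⟩ := msqrt_facts hQ
  set S := ((hP.1.eigenvectorUnitary : Matrix (Fin n) (Fin n) ℂ) *
      diagonal (((↑) : ℝ → ℂ) ∘ Real.sqrt ∘ hP.1.eigenvalues) *
      (star hP.1.eigenvectorUnitary : Matrix (Fin n) (Fin n) ℂ)) with hSdef
  set T := ((hQ.1.eigenvectorUnitary : Matrix (Fin n) (Fin n) ℂ) *
      diagonal (((↑) : ℝ → ℂ) ∘ Real.sqrt ∘ hQ.1.eigenvalues) *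
      (star hQ.1.eigenvectorUnitary : Matrix (Fin n) (Fin n) ℂ)) with hTdef
  have hSH : Sᴴ = S := hS.1
  have hTH : Tᴴ = T := hT.1
  have hPdot : ∀ x : Fin n → ℂ, star x ⬝ᵥ (P *ᵥ x) = ((env (S *ᵥ x) ^ 2 : ℝ) : ℂ) := by
    intro x
    rw [← hSS, ← Matrix.mulVec_mulVec, dot_shift, hSH, dot_self_eq]
  have hQdot : ∀ y : Fin n → ℂ, star y ⬝ᵥ (Q *ᵥ y) = ((env (T *ᵥ y) ^ 2 : ℝ) : ℂ) := by
    intro y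
    rw [← hTT, ← Matrix.mulVec_mulVec, dot_shift, hTH, dot_self_eq]
  constructor
  · intro h
    obtain ⟨g, p, hg, hpH, hSg, hgS, hpp, hSp⟩ := exists_pinv hS.1
    obtain ⟨g', p', hg', hp'H, hTg', hg'T, hp'p', hTp'⟩ := exists_pinv hT.1
    have csX : ∀ x y : Fin n → ℂ, ‖star x ⬝ᵥ (X *ᵥ y)‖ ^ 2
        ≤ env (S *ᵥ x) ^ 2 * env (T *ᵥ y) ^ 2 := by
      intro x y
      have hcs := cs h x y
      rwa [hPdot, hQdot, Complex.ofReal_re, Complex.ofReal_re] at hcs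
    have env_zero : env (0 : Fin n → ℂ) = 0 := by
      rw [env]
      simp
    have hXp : p * X = X := by
      have hz : p * X - X = 0 := by
        have : -(p * X - X) = (1 - p) * X := by noncomm_ring
        rw [← neg_eq_zero, this]
        apply eq_zero_of_dot
        intro x y
        have hrw : star x ⬝ᵥ (((1 - p) * X) *ᵥ y) = star ((1 - p) *ᵥ x) ⬝ᵥ (X *ᵥ y) := by
          rw [dot_shift', Matrix.conjTranspose_sub, Matrix.conjTranspose_one, hpH,
            Matrix.mulVec_mulVec]
        have hS0 : S *ᵥ ((1 - p) *ᵥ x) = 0 := by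
          rw [Matrix.mulVec_mulVec, Matrix.mul_sub, Matrix.mul_one, hSp, sub_self,
            Matrix.zero_mulVec]
        have hb := csX ((1 - p) *ᵥ x) y
        rw [hS0, env_zero] at hb
        have : ‖star ((1 - p) *ᵥ x) ⬝ᵥ (X *ᵥ y)‖ = 0 := by
          nlinarith [norm_nonneg (star ((1 - p) *ᵥ x) ⬝ᵥ (X *ᵥ y))]
        rw [hrw]
        exact norm_eq_zero.mp this
      exact sub_eq_zero.mp hz
    have hXp' : X * p' = X := by
      have hz : X * p' - X = 0 := by
        have : -(X * p' - X) = X * (1 - p') := by noncomm_ring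
        rw [← neg_eq_zero, this]
        apply eq_zero_of_dot
        intro x y
        have hrw : star x ⬝ᵥ ((X * (1 - p')) *ᵥ y) = star x ⬝ᵥ (X *ᵥ ((1 - p') *ᵥ y)) := by
          rw [Matrix.mulVec_mulVec]
        have hT0 : T *ᵥ ((1 - p') *ᵥ y) = 0 := by
          rw [Matrix.mulVec_mulVec, Matrix.mul_sub, Matrix.mul_one, hTp', sub_self,
            Matrix.zero_mulVec]
        have hb := csX x ((1 - p') *ᵥ y)
        rw [hT0, env_zero] at hb
        have : ‖star x ⬝ᵥ (X *ᵥ ((1 - p') *ᵥ y))‖ = 0 := by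
          nlinarith [norm_nonneg (star x ⬝ᵥ (X *ᵥ ((1 - p') *ᵥ y)))]
        rw [hrw]
        exact norm_eq_zero.mp this
      exact sub_eq_zero.mp hz
    refine ⟨g * X * g', ?_, ?_⟩
    · apply specNorm_le_one
      have hinner : ∀ u w : Fin n → ℂ,
          ‖star u ⬝ᵥ ((g * X * g') *ᵥ w)‖ ≤ env u * env w := by
        intro u w
        have h1 : star u ⬝ᵥ ((g * X * g') *ᵥ w) = star (g *ᵥ u) ⬝ᵥ (X *ᵥ (g' *ᵥ w)) := by
          rw [← Matrix.mulVec_mulVec, ← Matrix.mulVec_mulVec, dot_shift,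
            (show gᴴ = g from hg)]
        have h2 := csX (g *ᵥ u) (g' *ᵥ w)
        rw [Matrix.mulVec_mulVec _ S g, hSg, Matrix.mulVec_mulVec _ T g', hTg'] at h2
        have hu : env (p *ᵥ u) ≤ env u := proj_bound hpH hpp u
        have hw : env (p' *ᵥ w) ≤ env w := proj_bound hp'H hp'p' w
        rw [h1]
        have hsq : ‖star (g *ᵥ u) ⬝ᵥ (X *ᵥ (g' *ᵥ w))‖ ^ 2 ≤ (env u * env w) ^ 2 := by
          calc ‖star (g *ᵥ u) ⬝ᵥ (X *ᵥ (g' *ᵥ w))‖ ^ 2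
              ≤ env (p *ᵥ u) ^ 2 * env (p' *ᵥ w) ^ 2 := h2
            _ ≤ (env u * env w) ^ 2 := by
                rw [mul_pow]
                exact mul_le_mul (pow_le_pow_left₀ (env_nonneg _) hu 2)
                  (pow_le_pow_left₀ (env_nonneg _) hw 2) (sq_nonneg _)
                  (pow_nonneg (env_nonneg _) 2)
        nlinarith [hsq, norm_nonneg (star (g *ᵥ u) ⬝ᵥ (X *ᵥ (g' *ᵥ w))),
          mul_nonneg (env_nonneg u) (env_nonneg w)]
      intro v
      have h1 := hinner ((g * X * g') *ᵥ v) v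
      have h2 : env ((g * X * g') *ᵥ v) ^ 2
          = (star ((g * X * g') *ᵥ v) ⬝ᵥ ((g * X * g') *ᵥ v)).re := by
        rw [dot_self_eq, Complex.ofReal_re]
      have h3 : (star ((g * X * g') *ᵥ v) ⬝ᵥ ((g * X * g') *ᵥ v)).re
          ≤ ‖star ((g * X * g') *ᵥ v) ⬝ᵥ ((g * X * g') *ᵥ v)‖ :=
        Complex.re_le_norm _
      rcases eq_or_lt_of_le (env_nonneg ((g * X * g') *ᵥ v)) with h0 | h0
      · rw [← h0]; exact env_nonneg v
      · nlinarith
    · rw [hmP, hmQ]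
      have hassoc : S * (g * X * g') * T = (S * g) * X * (g' * T) := by noncomm_ring
      rw [hassoc, hSg, hg'T]
      rw [Matrix.mul_assoc, hXp', hXp]
  · rintro ⟨K, hK, hX⟩
    rw [hmP, hmQ] at hX
    refine Matrix.PosSemidef.of_dotProduct_mulVec_nonneg ?_ ?_
    · show (Matrix.fromBlocks P X Xᴴ Q)ᴴ = _
      rw [Matrix.fromBlocks_conjTranspose, Matrix.conjTranspose_conjTranspose, hP.1, hQ.1]
    · intro v
      rw [show v = Sum.elim (v ∘ Sum.inl) (v ∘ Sum.inr) from elim_decomp v, quad]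
      set x := v ∘ Sum.inl
      set y := v ∘ Sum.inr
      set z := star x ⬝ᵥ (X *ᵥ y) with hzdef
      have hzre : |z.re| ≤ env (S *ᵥ x) * env (T *ᵥ y) := by
        have h1 : z = star (S *ᵥ x) ⬝ᵥ (K *ᵥ (T *ᵥ y)) := by
          rw [hzdef, hX, ← Matrix.mulVec_mulVec, ← Matrix.mulVec_mulVec, dot_shift, hSH]
        have h2 : ‖z‖ ≤ env (S *ᵥ x) * env (K *ᵥ (T *ᵥ y)) := by
          rw [h1]; exact dot_norm_le _ _
        have h3 : env (K *ᵥ (T *ᵥ y)) ≤ env (T *ᵥ y) := by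
          have := env_mulVec_le K (T *ᵥ y)
          nlinarith [env_nonneg (T *ᵥ y)]
        calc |z.re| ≤ ‖z‖ := Complex.abs_re_le_norm z
          _ ≤ env (S *ᵥ x) * env (K *ᵥ (T *ᵥ y)) := h2
          _ ≤ env (S *ᵥ x) * env (T *ᵥ y) :=
              mul_le_mul_of_nonneg_left h3 (env_nonneg _)
      rw [dot_conj, hPdot, hQdot]
      have heq : ((env (S *ᵥ x) ^ 2 : ℝ) : ℂ) + z + starRingEnd ℂ z
          + ((env (T *ᵥ y) ^ 2 : ℝ) : ℂ)
          = (((env (S *ᵥ x) ^ 2 + 2 * z.re + env (T *ᵥ y) ^ 2 : ℝ)) : ℂ) := by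
        rw [add_assoc (((env (S *ᵥ x) ^ 2 : ℝ)) : ℂ), Complex.add_conj]
        push_cast
        ring
      rw [heq]
      apply Complex.zero_le_real.mpr
      nlinarith [abs_le.mp hzre, sq_nonneg (env (S *ᵥ x) - env (T *ᵥ y))]
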